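/- Let n ≥ 2 and s ≥ 1 be integers and let a = (a_1, …, a_n) ∈ ℤ^n be a primitive vector with all entries positive. Let S_a = {x ∈ ℝ^{n−1} : x ≥ 0 componentwise, a_1 x_1 + ⋯ + a_{n−1} x_{n−1} ≤ 1} and let L_a = {z ∈ ℤ^{n−1} : a_1 z_1 + ⋯ + a_{n−1} z_{n−1} ≡ 0 (mod a_n)}. Then μ_s(S_a, L_a) = F_s(a) + a_1 + ⋯ + a_n. -/

import Mathlib

open scoped BigOperators
open Matrix

noncomputable section

/-- The real matrix obtained from an integer matrix. -/
def Rmat {m n : ℕ} (A : Matrix (Fin m) (Fin n) ℤ) : Matrix (Fin m) (Fin n) ℝ :=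
  A.map (Int.cast : ℤ → ℝ)

/-- The real vector obtained from an integer vector. -/
def Rvec {m : ℕ} (b : Fin m → ℤ) : Fin m → ℝ := fun i => (b i : ℝ)

/-- The knapsack polytope P(A,b) = {x ≥ 0 : A x = b}. -/
def knap {m n : ℕ} (A : Matrix (Fin m) (Fin n) ℤ) (b : Fin m → ℝ) : Set (Fin n → ℝ) :=
  {x | (∀ i, 0 ≤ x i) ∧ (Rmat A).mulVec x = b}

/-- The set F_s(A) of integer vectors b for which P(A,b) contains at least s integer points. -/
def feas {m n : ℕ} (s : ℕ) (A : Matrix (Fin m) (Fin n) ℤ) : Set (Fin m → ℤ) :=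
  {b | s ≤ Set.ncard {x : Fin n → ℤ | (∀ i, 0 ≤ x i) ∧ A.mulVec x = b}}

/-- The cone generated by the columns of A. -/
def coneOf {m n : ℕ} (A : Matrix (Fin m) (Fin n) ℤ) : Set (Fin m → ℝ) :=
  {y | ∃ x : Fin n → ℝ, (∀ i, 0 ≤ x i) ∧ (Rmat A).mulVec x = y}

/-- The generalized diagonal s-Frobenius number g_s(A, w). -/
def gDiag {m n : ℕ} (s : ℕ) (A : Matrix (Fin m) (Fin n) ℤ) (w : Fin m → ℝ) : ℝ :=
  sInf {t : ℝ | 0 ≤ t ∧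
    ∀ b : Fin m → ℤ, Rvec b ∈ interior ((fun c => t • w + c) '' coneOf A) → b ∈ feas s A}

/-- v = A·1 is the sum of the columns of A (as a real vector). -/
def vA {m n : ℕ} (A : Matrix (Fin m) (Fin n) ℤ) : Fin m → ℝ :=
  (Rmat A).mulVec (fun _ => 1)

/-- The diagonal s-Frobenius number g_s(A) = g_s(A, A·1). -/
def gFrob {m n : ℕ} (s : ℕ) (A : Matrix (Fin m) (Fin n) ℤ) : ℝ := gDiag s A (vA A)

/-- The regularity assumptions: the m×m minors of A have gcd 1, and the only
nonnegative real solution of A x = 0 is x = 0. -/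
def regular {m n : ℕ} (A : Matrix (Fin m) (Fin n) ℤ) : Prop :=
  Finset.univ.gcd (fun I : Fin m ↪ Fin n => (A.submatrix id ⇑I).det) = 1 ∧
  ∀ x : Fin n → ℝ, (∀ i, 0 ≤ x i) → (Rmat A).mulVec x = 0 → x = 0

/-- The s-covering radius of K with respect to L: the smallest μ > 0 such that every
point of the real span of L lies in y + μK for at least s distinct y ∈ L. -/
def muCov {N : ℕ} (s : ℕ) (K L : Set (Fin N → ℝ)) : ℝ :=
  sInf {μ : ℝ | 0 < μ ∧ ∀ x ∈ Submodule.span ℝ L,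
    ∃ T : Finset (Fin N → ℝ), ↑T ⊆ L ∧ s ≤ T.card ∧ ∀ y ∈ T, ∃ k ∈ K, x = y + μ • k}

/-- The set of absolute values of m×m minors of A. -/
def minorAbs {m n : ℕ} (A : Matrix (Fin m) (Fin n) ℤ) : Set ℤ :=
  {d | ∃ I : Fin m ↪ Fin n, d = |(A.submatrix id ⇑I).det|}

/-- m(A): the minimal absolute m×m minor of A. -/
def mMin {m n : ℕ} (A : Matrix (Fin m) (Fin n) ℤ) : ℤ := sInf (minorAbs A)

/-- M(A): the maximal absolute m×m minor of A. -/
def mMax {m n : ℕ} (A : Matrix (Fin m) (Fin n) ℤ) : ℤ := sSup (minorAbs A)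

/-- The lattice L_A^⊥ = {z ∈ ℤ^n : A z = 0}, viewed as a subset of ℝ^n. -/
def kerLat {m n : ℕ} (A : Matrix (Fin m) (Fin n) ℤ) : Set (Fin n → ℝ) :=
  {x | ∃ z : Fin n → ℤ, A.mulVec z = 0 ∧ x = Rvec z}

/-- √(det (A Aᵀ)). -/
def sqrtDet {m n : ℕ} (A : Matrix (Fin m) (Fin n) ℤ) : ℝ :=
  Real.sqrt (((A * Aᵀ).det : ℤ) : ℝ)

/-- The s-Frobenius number of a positive primitive integer vector. -/
def sFrob {n : ℕ} (s : ℕ) (a : Fin n → ℤ) : ℤ :=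
  sSup {b : ℤ | Set.ncard {x : Fin n → ℤ | (∀ i, 0 ≤ x i) ∧ ∑ i, a i * x i = b} < s}

/-- The full-rank lattice in ℝ^d with basis the columns of an invertible matrix B. -/
def latSet {d : ℕ} (B : Matrix (Fin d) (Fin d) ℝ) : Set (Fin d → ℝ) :=
  {x | ∃ z : Fin d → ℤ, x = B.mulVec (fun i => (z i : ℝ))}

/-- The absolute s-inhomogeneous minimum ϑ_s(K) = inf_L μ_s(K,L)/det(L)^{1/d}. -/
def theta (s d : ℕ) (K : Set (Fin d → ℝ)) : ℝ :=
  sInf {r : ℝ | ∃ B : Matrix (Fin d) (Fin d) ℝ, B.det ≠ 0 ∧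
    r = muCov s K (latSet B) / |B.det| ^ ((1 : ℝ) / d)}

/-- The standard simplex S_d ⊂ ℝ^d. -/
def stdSimplex' (d : ℕ) : Set (Fin d → ℝ) :=
  {x | (∀ i, 0 ≤ x i) ∧ ∑ i, x i ≤ 1}

/-- Kannan-type identity: μ_s(S_a, L_a) = F_s(a) + a₁ + ⋯ + aₙ, with n = d + 1. -/

def SolSet {n : ℕ} (a : Fin n → ℤ) (b : ℤ) : Set (Fin n → ℤ) :=
  {x : Fin n → ℤ | (∀ i, 0 ≤ x i) ∧ ∑ i, a i * x i = b}

lemma solSet_finite {n : ℕ} (a : Fin n → ℤ) (hpos : ∀ i, 0 < a i) (b : ℤ) :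
    (SolSet a b).Finite := by
  apply Set.Finite.subset (Set.Finite.pi (fun i : Fin n => Set.finite_Icc (0:ℤ) b))
  intro x hx
  obtain ⟨hx0, hxs⟩ := hx
  rw [Set.mem_pi]
  intro i _
  refine Set.mem_Icc.2 ⟨hx0 i, ?_⟩
  have h1 : a i * x i ≤ b := by
    rw [← hxs]
    exact Finset.single_le_sum (f := fun j => a j * x j)
      (fun j _ => mul_nonneg (hpos j).le (hx0 j)) (Finset.mem_univ i)
  have h2 : x i ≤ a i * x i := le_mul_of_one_le_left (hx0 i) (hpos i)
  linarith

lemma exists_bezout {ι : Type*} [DecidableEq ι] (t : Finset ι) (f : ι → ℤ) :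
    ∃ u : ι → ℤ, ∑ i ∈ t, f i * u i = t.gcd f := by
  classical
  induction t using Finset.induction_on with
  | empty => exact ⟨0, by simp⟩
  | @insert i t hi ih =>
    obtain ⟨u, hu⟩ := ih
    set g := t.gcd f with hg
    refine ⟨fun j => if j = i then Int.gcdA (f i) g else u j * Int.gcdB (f i) g, ?_⟩
    rw [Finset.sum_insert hi, Finset.gcd_insert, ← Int.coe_gcd, Int.gcd_eq_gcd_ab]
    simp only [if_pos rfl]
    have h2 : ∑ j ∈ t, f j * (if j = i then Int.gcdA (f i) g else u j * Int.gcdB (f i) g)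
        = (∑ j ∈ t, f j * u j) * Int.gcdB (f i) g := by
      rw [Finset.sum_mul]
      refine Finset.sum_congr rfl (fun j hj => ?_)
      rw [if_neg (by rintro rfl; exact hi hj)]
      ring
    rw [h2, hu]
    simp [← hg]

lemma reps_large {n : ℕ} (s : ℕ) (a : Fin n → ℤ) (hpos : ∀ i, 0 < a i)
    (u : Fin n → ℤ) (hu : ∑ i, a i * u i = 1) (i0 i1 : Fin n) (hne : i0 ≠ i1) :
    ∃ B : ℤ, ∀ b : ℤ, B ≤ b → s ≤ (SolSet a b).ncard := by
  classical
  refine ⟨(∑ i, a i * a i0) + s * (a i0 * a i1), fun b hb => ?_⟩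
  set r := b % a i0 with hr
  set y : Fin n → ℤ := fun i => if i = i0 then 0 else (r * u i) % a i0 with hy
  have hy0 : ∀ i, 0 ≤ y i := by
    intro i
    simp only [hy]
    split
    · exact le_refl 0
    · exact Int.emod_nonneg _ (hpos i0).ne'
  have hyle : ∀ i, y i ≤ a i0 := by
    intro i
    simp only [hy]
    split
    · exact (hpos i0).le
    · exact (Int.emod_lt_of_pos _ (hpos i0)).le
  set c0 := ∑ i, a i * y i with hc0
  have hc0nn : 0 ≤ c0 := Finset.sum_nonneg (fun i _ => mul_nonneg (hpos i).le (hy0 i))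
  have hc0le : c0 ≤ ∑ i, a i * a i0 :=
    Finset.sum_le_sum (fun i _ => mul_le_mul_of_nonneg_left (hyle i) (hpos i).le)
  have hdvd : a i0 ∣ b - c0 := by
    have h1 : a i0 ∣ b - r := Int.dvd_self_sub_of_emod_eq rfl
    have h2 : a i0 ∣ r - c0 := by
      have hrc : ∑ i, a i * (r * u i - y i) = r - c0 := by
        have h3 : ∑ i, a i * (r * u i - y i) = r * (∑ i, a i * u i) - ∑ i, a i * y i := by
          rw [Finset.mul_sum, ← Finset.sum_sub_distrib]
          exact Finset.sum_congr rfl (fun i _ => by ring)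
        rw [h3, hu, mul_one, hc0]
      rw [← hrc]
      refine Finset.dvd_sum (fun i _ => ?_)
      by_cases hii : i = i0
      · simp only [hy, if_pos hii, sub_zero, hii]
        exact dvd_mul_right _ _
      · simp only [hy, if_neg hii]
        exact Dvd.dvd.mul_left (Int.dvd_self_sub_of_emod_eq rfl) _
    have := dvd_add h1 h2
    simpa using this
  set q := (b - c0) / a i0 with hq
  have hqe : a i0 * q = b - c0 := Int.mul_ediv_cancel' hdvd
  have hqge : (s : ℤ) * a i1 ≤ q := by
    have h1 : a i0 * ((s:ℤ) * a i1) ≤ a i0 * q := by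
      rw [hqe]
      have : (s:ℤ) * (a i0 * a i1) ≤ b - c0 := by linarith
      linarith [this]
    exact le_of_mul_le_mul_left h1 (hpos i0)
  set ψ : ℕ → Fin n → ℤ := fun j i =>
    y i + (if i = i0 then q - (j:ℤ) * a i1 else 0) + (if i = i1 then (j:ℤ) * a i0 else 0)
    with hψ
  have hsol : ∀ j : ℕ, j < s → ψ j ∈ SolSet a b := by
    intro j hj
    constructor
    · intro i
      by_cases h0 : i = i0
      · have hni1 : i ≠ i1 := by rw [h0]; exact hne
        simp only [hψ, if_pos h0, if_neg hni1]
        have hy00 : y i = 0 := by simp [hy, if_pos h0]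
        have : (j:ℤ) * a i1 ≤ ((s:ℤ) - 1) * a i1 := by
          have hjs : (j:ℤ) ≤ (s:ℤ) - 1 := by omega
          exact mul_le_mul_of_nonneg_right hjs (hpos i1).le
        have hi1 : 0 < a i1 := hpos i1
        rw [hy00]
        linarith
      · by_cases h1 : i = i1
        · simp only [hψ, if_neg h0, if_pos h1]
          have h5 := hy0 i
          have h6 : (0:ℤ) ≤ (j:ℤ) * a i0 := mul_nonneg (Int.ofNat_nonneg j) (hpos i0).le
          linarith
        · simp only [hψ, if_neg h0, if_neg h1]
          simpa using hy0 i
    · have : ∑ i, a i * ψ j i = (∑ i, a i * y i)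
          + a i0 * (q - (j:ℤ) * a i1) + a i1 * ((j:ℤ) * a i0) := by
        simp only [hψ, mul_add, Finset.sum_add_distrib]
        congr 1
        · congr 1
          rw [Finset.sum_congr rfl (fun i _ => mul_ite (i = i0) (a i) _ (0:ℤ))]
          simp [Finset.sum_ite_eq' Finset.univ i0 (fun i => a i * (q - (j:ℤ) * a i1))]
        · rw [Finset.sum_congr rfl (fun i _ => mul_ite (i = i1) (a i) _ (0:ℤ))]
          simp [Finset.sum_ite_eq' Finset.univ i1 (fun i => a i * ((j:ℤ) * a i0))]
      rw [this, ← hc0]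
      have : a i0 * (q - (j:ℤ) * a i1) + a i1 * ((j:ℤ) * a i0) = a i0 * q := by ring
      linarith [hqe]
  have hinj : Set.InjOn ψ ↑(Finset.range s) := by
    intro j hj j' hj' hjj
    have := congrFun hjj i1
    simp only [hψ, if_neg (Ne.symm hne), if_pos rfl, if_true] at this
    have h2 : (j:ℤ) * a i0 = (j':ℤ) * a i0 := by linarith
    have := mul_right_cancel₀ (hpos i0).ne' h2
    exact_mod_cast this
  calc (s:ℕ) = (Finset.range s).card := (Finset.card_range s).symm
    _ = ((Finset.range s).image ψ).card := (Finset.card_image_of_injOn hinj).symm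
    _ = (↑((Finset.range s).image ψ) : Set (Fin n → ℤ)).ncard := (Set.ncard_coe_finset _).symm
    _ ≤ (SolSet a b).ncard := by
        refine Set.ncard_le_ncard ?_ (solSet_finite a hpos b)
        intro x hx
        simp only [Finset.coe_image, Set.mem_image, Finset.mem_coe, Finset.mem_range] at hx
        obtain ⟨j, hj, rfl⟩ := hx
        exact hsol j hj

theorem stmt_12 {d : ℕ} (hd : 1 ≤ d) (s : ℕ) (hs : 1 ≤ s)
    (a : Fin (d + 1) → ℤ) (hpos : ∀ i, 0 < a i) (hprim : Finset.univ.gcd a = 1) :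
    muCov s {x : Fin d → ℝ | (∀ i, 0 ≤ x i) ∧ ∑ i, (a (Fin.castSucc i) : ℝ) * x i ≤ 1}
        {x : Fin d → ℝ | ∃ z : Fin d → ℤ,
          x = Rvec z ∧ a (Fin.last d) ∣ ∑ i, a (Fin.castSucc i) * z i} =
      (sFrob s a : ℝ) + ∑ i, (a i : ℝ) := by
  classical
  obtain ⟨u, hu⟩ := exists_bezout Finset.univ a
  rw [hprim] at hu
  have haN : 0 < a (Fin.last d) := hpos _
  have hA' : ∀ i : Fin d, 0 < a (Fin.castSucc i) := fun i => hpos _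
  have hSA' : 0 < ∑ i : Fin d, a (Fin.castSucc i) :=
    Finset.sum_pos (fun i _ => hA' i) ⟨⟨0, hd⟩, Finset.mem_univ _⟩
  have hsplit : ∑ i, a i = (∑ i : Fin d, a (Fin.castSucc i)) + a (Fin.last d) :=
    Fin.sum_univ_castSucc (fun i => a i)
  have hsum_split : ∀ z : Fin (d+1) → ℤ, ∑ i, a i * z i =
      (∑ i : Fin d, a (Fin.castSucc i) * z (Fin.castSucc i)) + a (Fin.last d) * z (Fin.last d) :=
    fun z => Fin.sum_univ_castSucc (fun i => a i * z i)
  set F := sFrob s a with hFdef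
  have hsolm1 : SolSet a (-1) = ∅ := by
    ext x
    simp only [SolSet, Set.mem_setOf_eq, Set.mem_empty_iff_false, iff_false, not_and]
    intro hx0
    have h1 : (0:ℤ) ≤ ∑ i, a i * x i :=
      Finset.sum_nonneg fun i _ => mul_nonneg (hpos i).le (hx0 i)
    omega
  obtain ⟨B, hB⟩ := reps_large s a hpos u hu ⟨0, Nat.succ_pos d⟩ ⟨1, by omega⟩
    (Fin.ne_of_val_ne Nat.zero_ne_one)
  have hSne : Set.Nonempty {b : ℤ | (SolSet a b).ncard < s} := by
    refine ⟨-1, ?_⟩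
    simp only [Set.mem_setOf_eq, hsolm1, Set.ncard_empty]
    omega
  have hbdd : BddAbove {b : ℤ | (SolSet a b).ncard < s} := by
    refine ⟨B, fun b hb => ?_⟩
    by_contra h
    push_neg at h
    exact absurd (hB b h.le) (not_le.2 hb)
  have hFS : (SolSet a F).ncard < s := Int.csSup_mem hSne hbdd
  have hFub : ∀ b : ℤ, (SolSet a b).ncard < s → b ≤ F := fun b hb => le_csSup hbdd hb
  have hgt : ∀ b : ℤ, F < b → s ≤ (SolSet a b).ncard :=
    fun b h => le_of_not_gt (fun hc => absurd (hFub b hc) (not_le.2 h))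
  have hFm1 : (-1:ℤ) ≤ F := by
    refine hFub _ ?_
    simp only [hsolm1, Set.ncard_empty]
    omega
  have hSAll2 : (2:ℤ) ≤ ∑ i, a i := by
    calc (2:ℤ) ≤ ((d:ℤ)+1) := by exact_mod_cast by omega
      _ = ∑ _i : Fin (d+1), (1:ℤ) := by simp
      _ ≤ ∑ i, a i := Finset.sum_le_sum (fun i _ => hpos i)
  set v : ℝ := (F:ℝ) + ∑ i, (a i : ℝ) with hvdef
  have hvint : v = ((F + ∑ i, a i : ℤ) : ℝ) := by rw [hvdef]; push_cast; ring
  have hv1 : (1:ℝ) ≤ v := by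
    rw [hvint]
    exact_mod_cast (by omega : (1:ℤ) ≤ F + ∑ i, a i)
  have hvFSA : v = (F:ℝ) + (∑ i : Fin d, a (Fin.castSucc i) : ℤ) + (a (Fin.last d) : ℝ) := by
    rw [hvint, hsplit]; push_cast; ring
  have hspan : ∀ w : Fin d → ℝ, w ∈ Submodule.span ℝ
      {x : Fin d → ℝ | ∃ z : Fin d → ℤ,
        x = Rvec z ∧ a (Fin.last d) ∣ ∑ i, a (Fin.castSucc i) * z i} := by
    intro w
    have hbase : ∀ i : Fin d, (fun j => if i = j then ((a (Fin.last d) : ℤ) : ℝ) else 0) ∈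
        {x : Fin d → ℝ | ∃ z : Fin d → ℤ,
          x = Rvec z ∧ a (Fin.last d) ∣ ∑ i, a (Fin.castSucc i) * z i} := by
      intro i
      refine ⟨fun j => if i = j then a (Fin.last d) else 0, ?_, ?_⟩
      · funext j
        simp only [Rvec]
        split <;> simp
      · have h1 : ∑ j : Fin d, a (Fin.castSucc j) * (if i = j then a (Fin.last d) else 0)
            = a (Fin.castSucc i) * a (Fin.last d) := by
          rw [Finset.sum_eq_single i]
          · simp
          · intro j _ hj; simp [Ne.symm hj]
          · intro h; exact absurd (Finset.mem_univ i) h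
        rw [h1]
        exact Dvd.dvd.mul_left dvd_rfl _
    have hw : w = ∑ i : Fin d, (w i / ((a (Fin.last d) : ℤ) : ℝ)) •
        (fun j => if i = j then ((a (Fin.last d) : ℤ) : ℝ) else 0) := by
      funext j
      rw [Finset.sum_apply]
      rw [Finset.sum_eq_single j]
      · have haNR : ((a (Fin.last d) : ℤ) : ℝ) ≠ 0 := by
          exact_mod_cast haN.ne'
        simp [div_mul_cancel₀ _ haNR]
      · intro i _ hij
        simp [hij]
      · intro h; exact absurd (Finset.mem_univ j) h
    rw [hw]
    exact Submodule.sum_mem _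
      (fun i _ => Submodule.smul_mem _ _ (Submodule.subset_span (hbase i)))
  unfold muCov
  refine Eq.trans (congrArg sInf (Set.Subset.antisymm ?_ ?_ : _ = Set.Ici v)) csInf_Ici
  · -- covering μ implies v ≤ μ
    rintro μ ⟨hμpos, hcov⟩
    rw [Set.mem_Ici]
    by_contra hvμ
    push_neg at hvμ
    have hSA'R : (0:ℝ) < ((∑ i : Fin d, a (Fin.castSucc i) : ℤ) : ℝ) := by exact_mod_cast hSA'
    set SR : ℝ := ((∑ i : Fin d, a (Fin.castSucc i) : ℤ) : ℝ) with hSRdef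
    set ε : ℝ := min (1/2) ((v - μ) / (2 * SR)) with hεdef
    have hε0 : 0 < ε := lt_min (by norm_num) (div_pos (by linarith) (by linarith))
    have hε1 : ε < 1 := lt_of_le_of_lt (min_le_left _ _) (by norm_num)
    have hεs : ε * SR < v - μ := by
      have h1 : ε ≤ (v - μ) / (2 * SR) := min_le_right _ _
      have h2 : ε * SR ≤ ((v - μ) / (2 * SR)) * SR :=
        mul_le_mul_of_nonneg_right h1 hSA'R.le
      have h3 : ((v - μ) / (2 * SR)) * SR = (v - μ)/2 := by
        field_simp
      rw [h3] at h2
      linarith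
    set c : Fin d → ℤ := fun i => F * u (Fin.castSucc i) + 1 with hcdef
    set x : Fin d → ℝ := fun i => (c i : ℝ) - ε with hxdef
    obtain ⟨T, hTL, hTcard, hTcov⟩ := hcov x (hspan x)
    set Hmap : (Fin d → ℝ) → Fin (d+1) → ℤ := fun y =>
      Fin.lastCases
        ((F - ∑ i : Fin d, a (Fin.castSucc i) * (c i - 1 - ⌊y i⌋)) / a (Fin.last d))
        (fun i => c i - 1 - ⌊y i⌋) with hHdef
    have hkey : ∀ y ∈ (T : Set (Fin d → ℝ)), Hmap y ∈ SolSet a F := by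
      intro y hy
      obtain ⟨z, hyz, hzdvd⟩ := hTL hy
      obtain ⟨k, ⟨hk0, hk1⟩, hxyk⟩ := hTcov y hy
      have hyi : ∀ i, y i = (z i : ℝ) := fun i => by rw [hyz]; rfl
      have hfl : ∀ i, ⌊y i⌋ = z i := by
        intro i
        rw [hyi i]
        exact Int.floor_intCast _
      have hxy : ∀ i, x i - y i = μ * k i := by
        intro i
        have h1 := congrFun hxyk i
        simp only [Pi.add_apply, Pi.smul_apply, smul_eq_mul] at h1
        linarith
      have hzc : ∀ i, z i ≤ c i - 1 := by
        intro i
        have h1 : 0 ≤ μ * k i := mul_nonneg hμpos.le (hk0 i)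
        have h2 := hxy i
        have h3 : (z i : ℝ) ≤ (c i : ℝ) - ε := by
          rw [← hyi i]
          simp only [hxdef] at h2
          linarith
        have h4 : (z i : ℝ) < (c i : ℝ) := by linarith
        have h5 : z i < c i := by exact_mod_cast h4
        omega
      have hsumk : ∑ i : Fin d, (a (Fin.castSucc i) : ℝ) * (x i - y i) ≤ μ := by
        have h1 : ∑ i : Fin d, (a (Fin.castSucc i) : ℝ) * (x i - y i)
            = μ * ∑ i : Fin d, (a (Fin.castSucc i) : ℝ) * k i := by
          rw [Finset.mul_sum]
          refine Finset.sum_congr rfl (fun i _ => ?_)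
          rw [hxy i]
          ring
        rw [h1]
        have h2 := mul_le_mul_of_nonneg_left hk1 hμpos.le
        simpa using h2
      set W : ℤ := ∑ i : Fin d, a (Fin.castSucc i) * (c i - z i) with hWdef
      have hWr : (W:ℝ) = (∑ i : Fin d, (a (Fin.castSucc i) : ℝ) * (x i - y i)) + ε * SR := by
        rw [hWdef, hSRdef]
        push_cast
        rw [Finset.mul_sum, ← Finset.sum_add_distrib]
        refine Finset.sum_congr rfl (fun i _ => ?_)
        rw [hyi i]
        simp only [hxdef]
        ring
      have hWlt : (W:ℝ) < (F:ℝ) + SR + (a (Fin.last d) : ℝ) := by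
        have h1 : (W:ℝ) ≤ μ + ε * SR := by rw [hWr]; linarith
        have h2 : (W:ℝ) < v := by linarith
        rw [hvFSA] at h2
        exact h2
      have hWZ : W < F + (∑ i : Fin d, a (Fin.castSucc i)) + a (Fin.last d) := by
        have : (W:ℝ) < ((F + (∑ i : Fin d, a (Fin.castSucc i)) + a (Fin.last d) : ℤ) : ℝ) := by
          push_cast
          rw [hSRdef] at hWlt
          push_cast at hWlt
          linarith
        exact_mod_cast this
      set A : ℤ := ∑ i : Fin d, a (Fin.castSucc i) * (c i - 1 - z i) with hAdef
      have hAW : A = W - ∑ i : Fin d, a (Fin.castSucc i) := by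
        rw [hAdef, hWdef, ← Finset.sum_sub_distrib]
        refine Finset.sum_congr rfl (fun i _ => by ring)
      have hAlt : A < F + a (Fin.last d) := by omega
      have hdvdFA : a (Fin.last d) ∣ F - A := by
        have h1 : ∑ i : Fin d, a (Fin.castSucc i) * (c i - 1)
            = F * ∑ i : Fin d, a (Fin.castSucc i) * u (Fin.castSucc i) := by
          rw [Finset.mul_sum]
          refine Finset.sum_congr rfl (fun i _ => ?_)
          simp only [hcdef]
          ring
        have h3 : ∑ i : Fin d, a (Fin.castSucc i) * u (Fin.castSucc i)
            = 1 - a (Fin.last d) * u (Fin.last d) := by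
          have h2 := hu
          rw [Fin.sum_univ_castSucc (f := fun i => a i * u i)] at h2
          linarith
        have h4 : A = F * (1 - a (Fin.last d) * u (Fin.last d))
            - ∑ i : Fin d, a (Fin.castSucc i) * z i := by
          rw [← h3, ← h1, hAdef, ← Finset.sum_sub_distrib]
          refine Finset.sum_congr rfl (fun i _ => by ring)
        obtain ⟨m, hm⟩ := hzdvd
        exact ⟨F * u (Fin.last d) + m, by rw [h4, hm]; ring⟩
      obtain ⟨m, hm⟩ := hdvdFA
      have hm0 : 0 ≤ m := by
        by_contra h
        push_neg at h
        have h1 : m ≤ -1 := by omega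
        have h2 : a (Fin.last d) * m ≤ a (Fin.last d) * (-1) :=
          mul_le_mul_of_nonneg_left h1 haN.le
        omega
      have hAF : ∑ i : Fin d, a (Fin.castSucc i) * (c i - 1 - ⌊y i⌋) = A := by
        rw [hAdef]
        exact Finset.sum_congr rfl (fun i _ => by rw [hfl i])
      have hHlast : Hmap y (Fin.last d) = m := by
        simp only [hHdef, Fin.lastCases_last, hAF, hm]
        exact Int.mul_ediv_cancel_left _ haN.ne'
      have hHcs : ∀ i : Fin d, Hmap y (Fin.castSucc i) = c i - 1 - z i := by
        intro i
        simp only [hHdef, Fin.lastCases_castSucc, hfl i]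
      constructor
      · intro j
        refine Fin.lastCases ?_ ?_ j
        · rw [hHlast]; exact hm0
        · intro i
          rw [hHcs i]
          have := hzc i
          omega
      · rw [hsum_split (Hmap y), hHlast]
        have h5 : ∑ i : Fin d, a (Fin.castSucc i) * Hmap y (Fin.castSucc i) = A := by
          rw [hAdef]
          exact Finset.sum_congr rfl (fun i _ => by rw [hHcs i])
        rw [h5]
        linarith [hm]
    have hinjH : Set.InjOn Hmap ↑T := by
      intro y hy y' hy' hyy
      obtain ⟨z, hyz, -⟩ := hTL hy
      obtain ⟨z', hyz', -⟩ := hTL hy'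
      funext i
      have h1 := congrFun hyy (Fin.castSucc i)
      simp only [hHdef, Fin.lastCases_castSucc] at h1
      have e1 : ⌊y i⌋ = z i := by rw [hyz]; exact Int.floor_intCast _
      have e2 : ⌊y' i⌋ = z' i := by rw [hyz']; exact Int.floor_intCast _
      have h3 : z i = z' i := by omega
      rw [hyz, hyz']
      simp only [Rvec]
      rw [h3]
    have hle : T.card ≤ (SolSet a F).ncard := by
      rw [← Set.ncard_coe_finset T]
      exact Set.ncard_le_ncard_of_injOn Hmap hkey hinjH (solSet_finite a hpos F)
    omega
  · -- v ≤ μ implies covering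
    intro μ hμ
    rw [Set.mem_Ici] at hμ
    have hμpos : (0:ℝ) < μ := lt_of_lt_of_le (by linarith) hμ
    refine ⟨hμpos, ?_⟩
    intro x _
    set c : Fin d → ℤ := fun i => ⌊x i⌋ with hcdef
    set r : ℤ := ∑ i : Fin d, a (Fin.castSucc i) * c i with hrdef
    set b : ℤ := F + 1 + (r - (F+1)) % a (Fin.last d) with hbdef
    have hb1 : F < b := by
      have := Int.emod_nonneg (r - (F+1)) haN.ne'
      omega
    have hb2 : b ≤ F + a (Fin.last d) := by
      have := Int.emod_lt_of_pos (r - (F+1)) haN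
      omega
    have hbr : a (Fin.last d) ∣ r - b := by
      refine ⟨(r - (F+1)) / a (Fin.last d), ?_⟩
      rw [hbdef, Int.emod_def]
      ring
    have hsb : s ≤ (SolSet a b).ncard := hgt b hb1
    have hfin := solSet_finite a hpos b
    set Xf := hfin.toFinset with hXf
    have hXcard : Xf.card = (SolSet a b).ncard := by
      rw [Set.ncard_eq_toFinset_card _ hfin]
    set g : (Fin (d+1) → ℤ) → (Fin d → ℝ) :=
      fun z => Rvec (fun i => c i - z (Fin.castSucc i)) with hg
    have hinjg : Set.InjOn g ↑Xf := by
      intro z hz z' hz' hzz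
      have hzS : z ∈ SolSet a b := hfin.mem_toFinset.1 hz
      have hz'S : z' ∈ SolSet a b := hfin.mem_toFinset.1 hz'
      have hcs : ∀ i : Fin d, z (Fin.castSucc i) = z' (Fin.castSucc i) := by
        intro i
        have h1 := congrFun hzz i
        simp only [hg, Rvec] at h1
        have := Int.cast_injective h1
        omega
      funext j
      refine Fin.lastCases ?_ (fun i => hcs i) j
      have e1 := hzS.2
      have e2 := hz'S.2
      rw [hsum_split] at e1 e2
      rw [Finset.sum_congr rfl (fun i _ => by rw [hcs i])] at e1
      have h3 : a (Fin.last d) * z (Fin.last d) = a (Fin.last d) * z' (Fin.last d) := by linarith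
      exact mul_left_cancel₀ haN.ne' h3
    refine ⟨Xf.image g, ?_, ?_, ?_⟩
    · intro y hy
      simp only [Finset.coe_image, Set.mem_image, Finset.mem_coe] at hy
      obtain ⟨z, hzX, rfl⟩ := hy
      have hzS : z ∈ SolSet a b := hfin.mem_toFinset.1 hzX
      refine ⟨fun i => c i - z (Fin.castSucc i), rfl, ?_⟩
      have e := hzS.2
      rw [hsum_split z] at e
      have h4 : ∑ i : Fin d, a (Fin.castSucc i) * (c i - z (Fin.castSucc i))
          = (r - b) + a (Fin.last d) * z (Fin.last d) := by
        have h5 : ∑ i : Fin d, a (Fin.castSucc i) * (c i - z (Fin.castSucc i))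
            = (∑ i : Fin d, a (Fin.castSucc i) * c i)
              - ∑ i : Fin d, a (Fin.castSucc i) * z (Fin.castSucc i) := by
          rw [← Finset.sum_sub_distrib]
          exact Finset.sum_congr rfl (fun i _ => by ring)
        rw [h5, ← hrdef]
        omega
      rw [h4]
      exact dvd_add hbr (Dvd.intro _ rfl)
    · rw [Finset.card_image_of_injOn hinjg, hXcard]
      exact hsb
    · intro y hy
      simp only [Finset.mem_image] at hy
      obtain ⟨z, hzX, rfl⟩ := hy
      have hzS : z ∈ SolSet a b := hfin.mem_toFinset.1 hzX
      have e := hzS.2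
      rw [hsum_split z] at e
      refine ⟨fun i => (x i - g z i)/μ, ⟨?_, ?_⟩, ?_⟩
      · intro i
        have h6 : (c i : ℝ) ≤ x i := Int.floor_le (x i)
        have h7 : (0:ℝ) ≤ (z (Fin.castSucc i) : ℝ) := by exact_mod_cast hzS.1 _
        have h8 : g z i = (c i : ℝ) - (z (Fin.castSucc i) : ℝ) := by
          simp [hg, Rvec]
        apply div_nonneg _ hμpos.le
        rw [h8]
        linarith
      · have h9 : ∑ i : Fin d, (a (Fin.castSucc i) : ℝ) * ((x i - g z i)/μ)
            = (∑ i : Fin d, (a (Fin.castSucc i) : ℝ) * (x i - g z i))/μ := by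
          rw [Finset.sum_div]
          exact Finset.sum_congr rfl (fun i _ => by ring)
        rw [h9, div_le_one hμpos]
        have h10 : ∑ i : Fin d, (a (Fin.castSucc i) : ℝ) * (x i - g z i)
            = (∑ i : Fin d, (a (Fin.castSucc i) : ℝ) * (x i - (c i:ℝ)))
              + ((∑ i : Fin d, a (Fin.castSucc i) * z (Fin.castSucc i) : ℤ) : ℝ) := by
          push_cast
          rw [← Finset.sum_add_distrib]
          refine Finset.sum_congr rfl (fun i _ => ?_)
          have h8 : g z i = (c i : ℝ) - (z (Fin.castSucc i) : ℝ) := by simp [hg, Rvec]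
          rw [h8]
          ring
        have h11 : ∑ i : Fin d, (a (Fin.castSucc i) : ℝ) * (x i - (c i:ℝ))
            ≤ ((∑ i : Fin d, a (Fin.castSucc i) : ℤ) : ℝ) := by
          push_cast
          refine Finset.sum_le_sum (fun i _ => ?_)
          have h12 : x i - (c i:ℝ) ≤ 1 := by
            have := Int.lt_floor_add_one (x i)
            simp only [hcdef]
            linarith
          have h13 : (0:ℝ) ≤ (a (Fin.castSucc i) : ℝ) := by exact_mod_cast (hA' i).le
          nlinarith
        have h14 : (∑ i : Fin d, a (Fin.castSucc i) * z (Fin.castSucc i) : ℤ) ≤ F + a (Fin.last d) := by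
          have h15 : 0 ≤ a (Fin.last d) * z (Fin.last d) :=
            mul_nonneg haN.le (hzS.1 _)
          omega
        have h16 : ((∑ i : Fin d, a (Fin.castSucc i) * z (Fin.castSucc i) : ℤ) : ℝ)
            ≤ (F:ℝ) + (a (Fin.last d) : ℝ) := by exact_mod_cast h14
        rw [h10]
        rw [hvFSA] at hμ
        linarith
      · funext i
        have hμne : μ ≠ 0 := hμpos.ne'
        simp only [Pi.add_apply, Pi.smul_apply, smul_eq_mul]
        field_simp
        ring

end
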